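/- For every real t > 1/2, the point it in the complex upper half-plane is not equivalent to i/2 under the action of Γ₀(4) by fractional linear transformations; that is, there is no matrix M = (a b; c d) in SL₂(ℤ) with 4 ∣ c such that M·(i/2) = it. -/

import Mathlib

open Complex Real MeasureTheory Set

/-- Sum of divisors function σ₁(n) = ∑_{d∣n} d. -/
def sigma1 (n : ℕ) : ℕ := ∑ d ∈ n.divisors, d

/-- The Jacobi theta function θ(z) = ∑_{n∈ℤ} q^{n²}, q = e^{2πiz}. -/
noncomputable def Theta (z : ℂ) : ℂ :=
  ∑' n : ℤ, Complex.exp (2 * Real.pi * Complex.I * z * (n : ℂ) ^ 2)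

/-- F₂(z) = ∑_{n≥1, n odd} σ₁(n) q^n, q = e^{2πiz}. -/
noncomputable def F₂ (z : ℂ) : ℂ :=
  ∑' n : ℕ, if Odd n then (sigma1 n : ℂ) * Complex.exp (2 * Real.pi * Complex.I * z) ^ n else 0

/-- Δ₄(z) = F₂(z)·(θ(z)⁴ − 16 F₂(z)). -/
noncomputable def Δ₄ (z : ℂ) : ℂ := F₂ z * (Theta z ^ 4 - 16 * F₂ z)

/-- D₂(z) = θ(z)⁴ − 32 F₂(z). -/
noncomputable def D₂ (z : ℂ) : ℂ := Theta z ^ 4 - 32 * F₂ z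
theorem not_Gamma0_equiv_half_i (t : ℝ) (ht : 1 / 2 < t) :
    ¬ ∃ a b c d : ℤ, a * d - b * c = 1 ∧ (4 : ℤ) ∣ c ∧
      ((a : ℂ) * (Complex.I / 2) + (b : ℂ)) / ((c : ℂ) * (Complex.I / 2) + (d : ℂ))
        = (t : ℂ) * Complex.I := by
  rintro ⟨a, b, c, d, hdet, ⟨k, rfl⟩, h⟩
  have hden : ((4 * k : ℤ) : ℂ) * (Complex.I / 2) + (d : ℂ) ≠ 0 := by
    intro h0
    rw [Complex.ext_iff] at h0
    simp [Complex.add_re, Complex.add_im, Complex.div_re, Complex.div_im] at h0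
    obtain ⟨h1, h2⟩ := h0
    have hk : k = 0 := by exact_mod_cast h2
    have hd : d = 0 := by exact_mod_cast h1
    subst hk hd
    simp at hdet
  rw [div_eq_iff hden, Complex.ext_iff] at h
  simp [Complex.add_re, Complex.add_im, Complex.mul_re, Complex.mul_im] at h
  obtain ⟨h1, h2⟩ := h
  have hdetR : (a : ℝ) * d - b * (4 * k) = 1 := by exact_mod_cast hdet
  have h2d := congrArg (· * (d:ℝ)) h2
  have h1k := congrArg (· * (k:ℝ)) h1
  have key : t * (2 * (d:ℝ)^2 + 8 * (k:ℝ)^2) = 1 := by nlinarith [h2d, h1k, hdetR]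
  by_cases hk : k = 0
  · subst hk
    have hd : d ≠ 0 := by rintro rfl; simp at hdet
    have hd1 : (1:ℝ) ≤ (d:ℝ)^2 := by
      have : (1:ℤ) ≤ d^2 := by rcases lt_or_gt_of_ne hd with h|h <;> nlinarith
      exact_mod_cast this
    push_cast at key
    nlinarith
  · have hk1 : (1:ℝ) ≤ (k:ℝ)^2 := by
      have : (1:ℤ) ≤ k^2 := by rcases lt_or_gt_of_ne hk with h|h <;> nlinarith
      exact_mod_cast this
    nlinarith [sq_nonneg (d:ℝ)]
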